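/- For α, β, v ∈ A* and finite F ⊆ A*, the element t = s_α E(F;v) s_β* of I(X) satisfies t t* = E(F ∪ {βv}; αv) and t* t = E(F ∪ {αv}; βv). -/
import Mathlib


open Function

/-- The one-sided shift map on `ℕ → A`. -/
def shft {A : Type*} (x : ℕ → A) : ℕ → A := fun n => x (n + 1)

/-- Concatenation of a finite word `w` with an infinite word `x`. -/
def wcat {A : Type*} (w : List A) (x : ℕ → A) : ℕ → A :=
  fun n => w.getD n (x (n - w.length))

/-- Partial bijections on `ℕ → A` modelled as relations (sets of pairs (input, output)). -/
abbrev PB (A : Type*) := Set ((ℕ → A) × (ℕ → A))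

/-- Composition on the largest possible domain: `rcomp r s` applies `s` first, then `r`
(i.e. the semigroup product `r · s`). -/
def rcomp {A : Type*} (r s : PB A) : PB A := {p | ∃ y, (p.1, y) ∈ s ∧ (y, p.2) ∈ r}

/-- Inverse of a partial bijection. -/
def rinv {A : Type*} (r : PB A) : PB A := {p | (p.2, p.1) ∈ r}

/-- The identity map on a subset `U`. -/
def idOn {A : Type*} (U : Set (ℕ → A)) : PB A := {p | p.1 ∈ U ∧ p.2 = p.1}

/-- The partial bijection `s_μ : x ↦ μx` on `{x ∈ X : μx ∈ X}`. -/
def sMap {A : Type*} (X : Set (ℕ → A)) (μ : List A) : PB A :=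
  {p | p.1 ∈ X ∧ wcat μ p.1 ∈ X ∧ p.2 = wcat μ p.1}

/-- The cylinder set `C(v) = {vx : x ∈ A^ℕ} ∩ X`. -/
def Cyl {A : Type*} (X : Set (ℕ → A)) (v : List A) : Set (ℕ → A) :=
  {y | y ∈ X ∧ ∃ x, y = wcat v x}

/-- `C(μ,ν) = {νx ∈ X : μx ∈ X}`. -/
def Cmn {A : Type*} (X : Set (ℕ → A)) (μ ν : List A) : Set (ℕ → A) :=
  {y | ∃ x, y = wcat ν x ∧ y ∈ X ∧ wcat μ x ∈ X}

/-- `C(F;v) = {vx ∈ X : fx ∈ X for all f ∈ F}`. -/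
def CFv {A : Type*} (X : Set (ℕ → A)) (F : Finset (List A)) (v : List A) : Set (ℕ → A) :=
  {y | ∃ x, y = wcat v x ∧ y ∈ X ∧ ∀ f ∈ F, wcat f x ∈ X}

/-- The idempotent `E(F;v) = Id_{C(F;v)}`. -/
def Efv {A : Type*} (X : Set (ℕ → A)) (F : Finset (List A)) (v : List A) : PB A :=
  idOn (CFv X F v)

/-- The set `E_X = {E(F;v)} ∪ {0}` of idempotents. -/
def EXset {A : Type*} (X : Set (ℕ → A)) : Set (PB A) :=
  {r | r = ∅ ∨ ∃ (F : Finset (List A)) (v : List A), r = Efv X F v}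

/-- The element `s_α E(F;v) s_β^*` of `I(X)`. -/
def elt {A : Type*} (X : Set (ℕ → A)) (α : List A) (F : Finset (List A)) (v β : List A) :
    PB A :=
  rcomp (rcomp (sMap X α) (Efv X F v)) (rinv (sMap X β))

/-- The inverse semigroup `S_X = {s_α E(F;v) s_β^*} ∪ {0}` (closed form). -/
def SXset {A : Type*} (X : Set (ℕ → A)) : Set (PB A) :=
  {r | r = ∅ ∨ ∃ (α β v : List A) (F : Finset (List A)), r = elt X α F v β}

/-- `α` and `β` are in lowest terms: they do not both end with the same letter. -/
def LowTerms {A : Type*} (α β : List A) : Prop :=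
  ∀ a : A, ¬(α.getLast? = some a ∧ β.getLast? = some a)

/-- A word viewed as an element of the free group on `A`. -/
def wgrp {A : Type*} (w : List A) : FreeGroup A := (w.map FreeGroup.of).prod

/-- Natural partial order on partial bijections: `s ≤ t` iff `t s^* s = s`. -/
def rle {A : Type*} (s t : PB A) : Prop := rcomp t (rcomp (rinv s) s) = s

/-- `P_k(x) = {μ ∈ A^k : μx ∈ X}`. -/
def Pk {A : Type*} (X : Set (ℕ → A)) (k : ℕ) (x : ℕ → A) : Set (List A) :=
  {μ | μ.length = k ∧ wcat μ x ∈ X}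

/-- `l`-past equivalence: `P_r(x) = P_r(y)` for all `r ≤ l`. -/
def pastEq {A : Type*} (X : Set (ℕ → A)) (l : ℕ) (x y : ℕ → A) : Prop :=
  ∀ r ≤ l, Pk X r x = Pk X r y

/-- The relation `x ~_{(k,l)} y`. -/
def klEq {A : Type*} (X : Set (ℕ → A)) (k l : ℕ) (x y : ℕ → A) : Prop :=
  (∀ i < k, x i = y i) ∧ pastEq X l (shft^[k] x) (shft^[k] y)


lemma wcat_append {A : Type*} (w u : List A) (x : ℕ → A) :
    wcat (w ++ u) x = wcat w (wcat u x) := by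
  funext n
  simp only [wcat, List.length_append, List.getD_eq_getElem?_getD, List.getElem?_append]
  rcases lt_or_ge n w.length with h | h
  · simp [h]
  · have hw : w[n]? = none := List.getElem?_eq_none h
    rw [if_neg (by omega), hw, Nat.sub_sub]
    simp

lemma wcat_inj {A : Type*} (w : List A) {x y : ℕ → A} (h : wcat w x = wcat w y) : x = y := by
  funext n
  have hw : w[n + w.length]? = none := List.getElem?_eq_none (by omega)
  have := congrFun h (n + w.length)
  simpa [wcat, List.getD_eq_getElem?_getD, hw] using this

lemma shft_iter {A : Type*} (k : ℕ) (x : ℕ → A) : shft^[k] x = fun n => x (n + k) := by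
  induction k generalizing x with
  | zero => simp
  | succ k ih =>
    rw [Function.iterate_succ_apply, ih]
    funext n
    simp only [shft]; ring_nf

lemma shft_wcat {A : Type*} (w : List A) (x : ℕ → A) : shft^[w.length] (wcat w x) = x := by
  rw [shft_iter]
  funext n
  have hw : w[n + w.length]? = none := List.getElem?_eq_none (by omega)
  simp [wcat, List.getD_eq_getElem?_getD, hw]

lemma mem_shift {A : Type*} {X : Set (ℕ → A)} (hXsh : ∀ x ∈ X, shft x ∈ X)
    (w u : List A) (x : ℕ → A) (h : wcat (w ++ u) x ∈ X) : wcat u x ∈ X := by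
  have hsh : ∀ n, ∀ y ∈ X, shft^[n] y ∈ X := by
    intro n
    induction n with
    | zero => exact fun y hy => hy
    | succ n ih =>
      intro y hy
      rw [Function.iterate_succ_apply']
      exact hXsh _ (ih y hy)
  have := hsh w.length _ h
  rwa [wcat_append, shft_wcat] at this

lemma mem_elt {A : Type*} {X : Set (ℕ → A)} (hXsh : ∀ x ∈ X, shft x ∈ X)
    (α β v : List A) (F : Finset (List A)) (p : (ℕ → A) × (ℕ → A)) :
    p ∈ elt X α F v β ↔ ∃ x, (∀ f ∈ F, wcat f x ∈ X) ∧ wcat (β ++ v) x ∈ X ∧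
      wcat (α ++ v) x ∈ X ∧ p.1 = wcat (β ++ v) x ∧ p.2 = wcat (α ++ v) x := by
  simp only [elt, rcomp, rinv, sMap, Efv, idOn, CFv, Set.mem_setOf_eq]
  constructor
  · rintro ⟨y, ⟨hyX, hβy, hp1⟩, z, ⟨⟨x, rfl, hyX2, hF⟩, rfl⟩, hyX3, hαy, hp2⟩
    exact ⟨x, hF, by rwa [wcat_append], by rwa [wcat_append],
      by rw [hp1, wcat_append], by rw [hp2, wcat_append]⟩
  · rintro ⟨x, hF, hβ, hα, hp1, hp2⟩
    have hv : wcat v x ∈ X := mem_shift hXsh β v x hβ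
    rw [wcat_append] at hβ hα
    exact ⟨wcat v x, ⟨hv, hβ, by rw [hp1, wcat_append]⟩,
      wcat v x, ⟨⟨x, rfl, hv, hF⟩, rfl⟩, hv, hα, by rw [hp2, wcat_append]⟩

theorem stmt5 {A : Type*} [Fintype A] [DecidableEq A] [TopologicalSpace A] [DiscreteTopology A]
    (X : Set (ℕ → A)) (hXcl : IsClosed X) (hXsh : ∀ x ∈ X, shft x ∈ X)
    (α β v : List A) (F : Finset (List A)) :
    rcomp (elt X α F v β) (rinv (elt X α F v β)) = Efv X (insert (β ++ v) F) (α ++ v) ∧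
    rcomp (rinv (elt X α F v β)) (elt X α F v β) = Efv X (insert (α ++ v) F) (β ++ v) := by
  have key : ∀ γ δ : List A, rcomp (rinv (elt X γ F v δ)) (elt X γ F v δ) =
      Efv X (insert (γ ++ v) F) (δ ++ v) := by
    intro γ δ
    ext ⟨p1, p2⟩
    simp only [rcomp, rinv, Set.mem_setOf_eq, Efv, idOn, CFv]
    constructor
    · rintro ⟨y, hy1, hy2⟩
      rw [mem_elt hXsh] at hy1 hy2
      obtain ⟨x1, hF1, hδ1, hγ1, hq1, hr1⟩ := hy1
      obtain ⟨x2, hF2, hδ2, hγ2, hq2, hr2⟩ := hy2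
      have hx : x1 = x2 := wcat_inj (γ ++ v) (hr1.symm.trans hr2)
      subst hx
      refine ⟨⟨x1, hq1, by rwa [← hq1] at hδ1, ?_⟩, hq2.trans hq1.symm⟩
      intro f hf
      rcases Finset.mem_insert.mp hf with rfl | hf
      · exact hγ1
      · exact hF1 f hf
    · rintro ⟨⟨x, rfl, hδ, hF⟩, rfl⟩
      have hγ : wcat (γ ++ v) x ∈ X := hF _ (Finset.mem_insert_self _ _)
      have hF' : ∀ f ∈ F, wcat f x ∈ X := fun f hf => hF f (Finset.mem_insert_of_mem hf)
      refine ⟨wcat (γ ++ v) x, ?_, ?_⟩ <;>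
        exact (mem_elt hXsh γ δ v F _).mpr ⟨x, hF', hδ, hγ, rfl, rfl⟩
  constructor
  · have h := key β α
    have hsym : rinv (elt X β F v α) = elt X α F v β := by
      ext ⟨p1, p2⟩
      rw [rinv, Set.mem_setOf_eq, mem_elt hXsh, mem_elt hXsh]
      constructor
      · rintro ⟨x, hF, h1, h2, h3, h4⟩
        exact ⟨x, hF, h2, h1, h4, h3⟩
      · rintro ⟨x, hF, h1, h2, h3, h4⟩
        exact ⟨x, hF, h2, h1, h4, h3⟩
    rw [← hsym]
    have hsym2 : rinv (rinv (elt X β F v α)) = elt X β F v α := rfl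
    rw [hsym2]
    exact h
  · exact key α β
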